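/- Let (A,m) be a d-dimensional Cohen–Macaulay local ring with infinite residue field and let x = x_1,…,x_d be a maximal A-superficial sequence. Assume the associated graded ring G(A) is not Cohen–Macaulay. Then for every n ≤ ϑ(A,x), the ideal m^n is not contained in (x_1,…,x_d). -/

import Mathlib

open IsLocalRing

universe u

noncomputable section

/-- The Jacobson radical of the zero ideal.  For a (not necessarily local) commutative
ring this plays the role of the maximal ideal `𝔪` of a local ring: when `A` is local it
coincides with `IsLocalRing.maximalIdeal A`. -/
def mIdl (A : Type u) [CommRing A] : Ideal A := (⊥ : Ideal A).jacobson

/-- The Loewy length `ℓℓ(M) = min { i ≥ 0 ∣ 𝔪^i M = 0 }`, valued in `ℕ∞`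
(`⊤` if no power of the maximal ideal kills `M`). -/
def loewyLength (A : Type u) [CommRing A] (M : Type u) [AddCommGroup M] [Module A M] : ℕ∞ :=
  sInf {e : ℕ∞ | ∃ i : ℕ, e = i ∧ (mIdl A ^ i) • (⊤ : Submodule A M) = ⊥}

/-- The length of a module: the Krull dimension of its lattice of submodules,
i.e. the supremum of lengths of chains of submodules. -/
def moduleLength (A : Type u) [CommRing A] (M : Type u) [AddCommGroup M] [Module A M] :
    WithBot ℕ∞ :=
  Order.krullDim (Submodule A M)

/-- The embedding dimension of a local ring: `dim_k 𝔪/𝔪²`. -/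
def embDim (A : Type u) [CommRing A] [IsLocalRing A] : ℕ :=
  Module.finrank (ResidueField A) (CotangentSpace A)

/-- A local ring is regular if its Krull dimension equals its embedding dimension. -/
def IsRegularLocal (A : Type u) [CommRing A] [IsLocalRing A] : Prop :=
  ringKrullDim A = ((embDim A : ℕ∞) : WithBot ℕ∞)

open Classical in
/-- The order of a local ring `A`:  `1` if `A` is regular, and otherwise
`min { n ∣ length (A/𝔪^{n+1}) < (n + c).choose n }` where `c` is the embedding dimension. -/
def ringOrder (A : Type u) [CommRing A] [IsLocalRing A] : ℕ :=
  if IsRegularLocal A then 1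
  else sInf {n : ℕ | moduleLength A (A ⧸ (mIdl A) ^ (n + 1)) <
    (((n + embDim A).choose n : ℕ∞) : WithBot ℕ∞)}

/-- `x ∈ 𝔪` is `A`-superficial if there is `c > 0` with
`(𝔪^{n+1} : x) ∩ 𝔪^c = 𝔪^n` for all `n ≫ 0`. -/
def IsSuperficial (A : Type u) [CommRing A] (x : A) : Prop :=
  x ∈ mIdl A ∧ ∃ c : ℕ, 0 < c ∧ ∃ N : ℕ, ∀ n ≥ N,
    (mIdl A ^ (n + 1)).colon (Ideal.span {x}) ⊓ mIdl A ^ c = mIdl A ^ n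

/-- `ϑ(A,x) = inf { n ∣ (𝔪^{n+1} : x) ≠ 𝔪^n }` (`⊤` if there is no such `n`). -/
def theta (A : Type u) [CommRing A] (x : A) : ℕ∞ :=
  sInf {e : ℕ∞ | ∃ n : ℕ, e = n ∧ (mIdl A ^ (n + 1)).colon (Ideal.span {x}) ≠ mIdl A ^ n}

/-- `x₁, …, x_r` is an `A`-superficial sequence if `x_i` is superficial for
`A/(x₁, …, x_{i-1})` for each `i`. -/
def IsSuperficialSeq : (A : Type u) → [inst : CommRing A] → List A → Prop
  | _, _, [] => True
  | A, _, x :: xs =>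
      IsSuperficial A x ∧
        IsSuperficialSeq (A ⧸ Ideal.span {x})
          (xs.map (Ideal.Quotient.mk (Ideal.span {x})))
termination_by A inst xs => xs.length
decreasing_by simp [List.length_map]

/-- `ϑ(A, x₁…x_d) = inf { ϑ(A_i, x_{i+1}) ∣ 0 ≤ i ≤ d-1 }` where `A_i = A/(x₁,…,x_i)`. -/
def thetaSeq : (A : Type u) → [inst : CommRing A] → List A → ℕ∞
  | _, _, [] => ⊤
  | A, _, x :: xs =>
      min (theta A x)
        (thetaSeq (A ⧸ Ideal.span {x})
          (xs.map (Ideal.Quotient.mk (Ideal.span {x}))))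
termination_by A inst xs => xs.length
decreasing_by simp [List.length_map]

/-- `ϑ(A) = sup { ϑ(A, 𝐱) ∣ 𝐱 a maximal superficial sequence }`. -/
def thetaSup (A : Type u) [CommRing A] : ℕ∞ :=
  sSup {e : ℕ∞ | ∃ xs : List A, IsSuperficialSeq A xs ∧
    (xs.length : WithBot ℕ∞) = ringKrullDim A ∧ e = thetaSeq A xs}

/-- A local ring is Cohen–Macaulay iff it admits a regular sequence, contained in the
maximal ideal, whose length is the Krull dimension. -/
def IsCohenMacaulayLocal (A : Type u) [CommRing A] : Prop :=
  ∃ rs : List A, (∀ r ∈ rs, r ∈ mIdl A) ∧ RingTheory.Sequence.IsRegular A rs ∧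
    (rs.length : WithBot ℕ∞) = ringKrullDim A

/-- A finitely generated module is maximal Cohen–Macaulay iff it admits a weakly regular
sequence, contained in the maximal ideal, whose length is the Krull dimension of the ring. -/
def IsMaximalCohenMacaulay (A : Type u) [CommRing A] (M : Type u) [AddCommGroup M]
    [Module A M] : Prop :=
  Module.Finite A M ∧ ∃ rs : List A, (∀ r ∈ rs, r ∈ mIdl A) ∧
    RingTheory.Sequence.IsWeaklyRegular M rs ∧ (rs.length : WithBot ℕ∞) = ringKrullDim A

/-- `M` has a free direct summand (a direct summand isomorphic to `A`). -/
def HasFreeSummand (A : Type u) [CommRing A] (M : Type u) [AddCommGroup M] [Module A M] :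
    Prop :=
  ∃ N P : Submodule A M, IsCompl N P ∧ Nonempty (N ≃ₗ[A] A)

/-- Auslander's delta invariant: the smallest `n` such that there is an epimorphism
`X ⊕ A^n → M` with `X` maximal Cohen–Macaulay having no free direct summand. -/
def deltaInv (A : Type u) [CommRing A] (M : Type u) [AddCommGroup M] [Module A M] : ℕ :=
  sInf {n : ℕ | ∃ X : ModuleCat.{u} A, IsMaximalCohenMacaulay A X ∧
    ¬ HasFreeSummand A X ∧ ∃ f : (X × (Fin n → A)) →ₗ[A] M, Function.Surjective f}

/-- Auslander's index: `index(A) = min { n ∣ δ_A(A/𝔪^n) ≥ 1 }`. -/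
def AuslanderIndex (A : Type u) [CommRing A] : ℕ :=
  sInf {n : ℕ | 1 ≤ deltaInv A (A ⧸ (mIdl A) ^ n)}

/-- `A` has finite injective dimension as a module over itself: there is a finite
injective resolution `0 → A → I⁰ → I¹ → ⋯ → Iⁿ → 0`. -/
def FiniteSelfInjDim (A : Type u) [CommRing A] : Prop :=
  ∃ (n : ℕ) (I : ℕ → ModuleCat.{u} A) (ε : A →ₗ[A] I 0) (d : ∀ i, I i →ₗ[A] I (i + 1)),
    (∀ i, Module.Injective A (I i)) ∧
    Function.Injective ε ∧
    LinearMap.range ε = LinearMap.ker (d 0) ∧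
    (∀ i, LinearMap.range (d i) = LinearMap.ker (d (i + 1))) ∧
    (∀ i, n < i → Subsingleton (I i))

/-- `M` admits a projective resolution `0 → P_n → ⋯ → P₀ → M → 0` of length at most `n`. -/
def HasProjResLengthLE (A : Type u) [CommRing A] (M : Type u) [AddCommGroup M] [Module A M]
    (n : ℕ) : Prop :=
  ∃ (P : ℕ → ModuleCat.{u} A) (ε : P 0 →ₗ[A] M) (d : ∀ i, P (i + 1) →ₗ[A] P i),
    (∀ i, Module.Projective A (P i)) ∧
    Function.Surjective ε ∧
    LinearMap.ker ε = LinearMap.range (d 0) ∧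
    (∀ i, LinearMap.ker (d i) = LinearMap.range (d (i + 1))) ∧
    (∀ i, n < i → Subsingleton (P i))

/-- `M` has finite projective dimension. -/
def FiniteProjDim (A : Type u) [CommRing A] (M : Type u) [AddCommGroup M] [Module A M] :
    Prop :=
  ∃ n : ℕ, HasProjResLengthLE A M n

/-- The projective dimension of `M`, valued in `ℕ∞`. -/
def projDim (A : Type u) [CommRing A] (M : Type u) [AddCommGroup M] [Module A M] : ℕ∞ :=
  sInf {e : ℕ∞ | ∃ n : ℕ, e = n ∧ HasProjResLengthLE A M n}

/-- The order of the element `x`: the largest `n` with `x ∈ 𝔪^n`. -/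
def elemOrder (A : Type u) [CommRing A] (x : A) : ℕ := sSup {n : ℕ | x ∈ mIdl A ^ n}

/-- The initial form `x*` of `x` (of degree `t = elemOrder A x`) is a nonzerodivisor on the
associated graded ring `G(A) = ⊕ 𝔪^n/𝔪^{n+1}`:  since the annihilator of a homogeneous
element is homogeneous, this says exactly that `x*` annihilates no nonzero homogeneous
element, i.e. for `a ∈ 𝔪^n`, `x·a ∈ 𝔪^{n+t+1}` forces `a ∈ 𝔪^{n+1}`. -/
def InitialFormRegular (A : Type u) [CommRing A] (x : A) : Prop :=
  ∀ (n : ℕ) (a : A), a ∈ mIdl A ^ n →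
    x * a ∈ mIdl A ^ (n + elemOrder A x + 1) → a ∈ mIdl A ^ (n + 1)

/-- The initial form of `x` is a *linear* form (`x ∈ 𝔪 \ 𝔪²`) which is a nonzerodivisor
on the associated graded ring `G(A)`. -/
def LinearInitialFormRegular (A : Type u) [CommRing A] (x : A) : Prop :=
  x ∈ mIdl A ∧ x ∉ mIdl A ^ 2 ∧
    ∀ (n : ℕ) (a : A), a ∈ mIdl A ^ n →
      x * a ∈ mIdl A ^ (n + 2) → a ∈ mIdl A ^ (n + 1)

/-- The initial forms `x₁*, …, x_r*` (all of degree one) form a regular sequence on the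
associated graded ring `G(A)`; since `G(A)/(x₁*) ≅ G(A/(x₁))` once `x₁*` is a
nonzerodivisor, this is expressed by the natural recursion through the quotient rings. -/
def GradedLinRegSeq : (A : Type u) → [inst : CommRing A] → List A → Prop
  | _, _, [] => True
  | A, _, x :: xs =>
      LinearInitialFormRegular A x ∧
        GradedLinRegSeq (A ⧸ Ideal.span {x})
          (xs.map (Ideal.Quotient.mk (Ideal.span {x})))
termination_by A inst xs => xs.length
decreasing_by simp [List.length_map]

/-- The associated graded ring `G(A)` of a local ring with infinite residue field is
Cohen–Macaulay iff some sequence of `dim A` linear forms is a `G(A)`-regular sequence. -/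
def AssocGradedIsCM (A : Type u) [CommRing A] : Prop :=
  ∃ ys : List A, (ys.length : WithBot ℕ∞) = ringKrullDim A ∧ GradedLinRegSeq A ys
section Prelim

variable {B : Type u} [CommRing B]

lemma mIdl_eq [IsLocalRing B] : mIdl B = IsLocalRing.maximalIdeal B :=
  IsLocalRing.jacobson_eq_maximalIdeal ⊥ bot_ne_top

lemma mIdl_ne_top [IsLocalRing B] : mIdl B ≠ ⊤ := by
  rw [mIdl_eq]; exact IsLocalRing.maximalIdeal.isMaximal B |>.ne_top

lemma mk_mem_mIdl (I : Ideal B) {r : B} (hr : r ∈ mIdl B) :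
    Ideal.Quotient.mk I r ∈ mIdl (B ⧸ I) := by
  rw [mIdl, Ideal.mem_jacobson_bot] at hr ⊢
  intro y
  obtain ⟨z, rfl⟩ := Ideal.Quotient.mk_surjective y
  have h := (hr z).map (Ideal.Quotient.mk I)
  simpa using h

lemma mIdl_quot [IsLocalRing B] (I : Ideal B) (hI : I ≠ ⊤) :
    mIdl (B ⧸ I) = (mIdl B).map (Ideal.Quotient.mk I) := by
  haveI := Ideal.Quotient.nontrivial_iff.mpr hI
  haveI : IsLocalRing (B ⧸ I) :=
    IsLocalRing.of_surjective' _ Ideal.Quotient.mk_surjective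
  refine le_antisymm ?_ (Ideal.map_le_iff_le_comap.mpr fun z hz => mk_mem_mIdl I hz)
  rw [mIdl_eq, mIdl_eq]
  intro x hx
  obtain ⟨z, rfl⟩ := Ideal.Quotient.mk_surjective x
  by_cases hz : z ∈ IsLocalRing.maximalIdeal B
  · exact Ideal.mem_map_of_mem _ hz
  · rw [IsLocalRing.mem_maximalIdeal, mem_nonunits_iff] at hx
    exact absurd ((IsLocalRing.notMem_maximalIdeal.mp hz).map (Ideal.Quotient.mk I)) hx

lemma mIdl_quot_pow [IsLocalRing B] (I : Ideal B) (hI : I ≠ ⊤) (i : ℕ) :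
    mIdl (B ⧸ I) ^ i = (mIdl B ^ i).map (Ideal.Quotient.mk I) := by
  rw [mIdl_quot I hI, Ideal.map_pow]

lemma pow_le_colon {y : B} (hy : y ∈ mIdl B) (j : ℕ) :
    mIdl B ^ j ≤ (mIdl B ^ (j + 1)).colon (Ideal.span {y}) := by
  intro u hu
  rw [Ideal.mem_colon_span_singleton]
  exact pow_succ (mIdl B) j ▸ Ideal.mul_mem_mul hu hy

lemma theta_colon {y : B} {n : ℕ} (h : (n : ℕ∞) ≤ theta B y) {j : ℕ} (hj : j < n) :
    (mIdl B ^ (j + 1)).colon (Ideal.span {y}) = mIdl B ^ j := by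
  by_contra hne
  have h1 : theta B y ≤ (j : ℕ∞) := sInf_le ⟨j, rfl, hne⟩
  exact absurd (Nat.cast_le.mp (h.trans h1)) (Nat.not_le.mpr hj)

lemma iInf_pow_mIdl [IsNoetherianRing B] [IsLocalRing B] : ⨅ i : ℕ, mIdl B ^ i = ⊥ := by
  rw [mIdl_eq]
  exact Ideal.iInf_pow_eq_bot_of_isLocalRing _
    (IsLocalRing.maximalIdeal.isMaximal B).ne_top

/-- If `u ∈ I ⊔ (y)^s` for all `s`, with `y` in the maximal ideal, then `u ∈ I`. -/
lemma mem_of_mem_sup_pow [IsNoetherianRing B] [IsLocalRing B] {I : Ideal B} (hI : I ≠ ⊤)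
    {y u : B} (hy : y ∈ mIdl B) (h : ∀ s : ℕ, u ∈ I ⊔ Ideal.span {y} ^ s) : u ∈ I := by
  haveI := Ideal.Quotient.nontrivial_iff.mpr hI
  haveI : IsLocalRing (B ⧸ I) :=
    IsLocalRing.of_surjective' _ Ideal.Quotient.mk_surjective
  haveI : IsNoetherianRing (B ⧸ I) :=
    isNoetherianRing_of_surjective B _ (Ideal.Quotient.mk I) Ideal.Quotient.mk_surjective
  rw [← Ideal.Quotient.eq_zero_iff_mem, ← Submodule.mem_bot (B ⧸ I),
    ← iInf_pow_mIdl (B := B ⧸ I)]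
  refine Submodule.mem_iInf _ |>.mpr fun s => ?_
  have h1 : Ideal.Quotient.mk I u ∈ (I ⊔ Ideal.span {y} ^ s).map (Ideal.Quotient.mk I) :=
    Ideal.mem_map_of_mem _ (h s)
  rw [Ideal.map_sup, Ideal.map_quotient_self, bot_sup_eq, Ideal.map_pow] at h1
  refine Ideal.pow_right_mono ?_ s h1
  rw [Ideal.map_span, Set.image_singleton, Ideal.span_singleton_le_iff_mem]
  exact mk_mem_mIdl I hy

/-- A ring has trivial socle. -/
def SocFree (B : Type u) [CommRing B] : Prop :=
  ∀ g : B, (∀ w ∈ mIdl B, g * w = 0) → g = 0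

lemma socFree_of_nzd {r : B} (hr : r ∈ mIdl B) (h : ∀ a : B, r * a = 0 → a = 0) :
    SocFree B := fun g hg => h g (by rw [mul_comm]; exact hg r hr)

lemma SocFree.eq_zero_of_mul_pow (hsf : SocFree B) {a : B} :
    ∀ {c : ℕ}, (∀ w ∈ mIdl B ^ c, a * w = 0) → a = 0 := by
  intro c
  induction c with
  | zero => intro h; simpa using h 1 (by simp)
  | succ c ih =>
    intro h
    refine ih fun w hw => hsf _ fun v hv => ?_
    rw [mul_assoc]
    exact h _ (pow_succ (mIdl B) c ▸ Ideal.mul_mem_mul hw hv)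

lemma nzd_of_superficial [IsNoetherianRing B] [IsLocalRing B] (hsf : SocFree B) {y : B}
    (hy : IsSuperficial B y) : ∀ a : B, y * a = 0 → a = 0 := by
  obtain ⟨hym, c, -, N, hN⟩ := hy
  intro a ha
  refine hsf.eq_zero_of_mul_pow (c := c) fun w hw => ?_
  have key : ∀ j : ℕ, a * w ∈ mIdl B ^ j := by
    intro j
    refine Ideal.pow_le_pow_right (Nat.le_add_right j N) ?_
    rw [← hN (j + N) (Nat.le_add_left N j)]
    refine Submodule.mem_inf.mpr ⟨?_, Ideal.mul_mem_left _ a hw⟩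
    rw [Ideal.mem_colon_span_singleton, mul_comm a w, mul_assoc, mul_comm a y, ha, mul_zero]
    exact zero_mem _
  have : a * w ∈ (⊥ : Ideal B) := by
    rw [← iInf_pow_mIdl (B := B)]; exact Submodule.mem_iInf _ |>.mpr key
  simpa using this

end Prelim
section AssPrimes

variable {R : Type u} {M : Type u} [CommRing R] [AddCommGroup M] [Module R M]

lemma isAssociatedPrime_sub_or_quot [IsNoetherianRing R] (N : Submodule R M) {p : Ideal R}
    (hp : IsAssociatedPrime p M) :
    IsAssociatedPrime p N ∨ IsAssociatedPrime p (M ⧸ N) := by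
  obtain ⟨hp1, u, hu⟩ := isAssociatedPrime_iff.mp hp
  have humem : ∀ r : R, r ∈ p ↔ r • u = 0 := fun r => by
    rw [hu, Submodule.mem_colon_singleton, Submodule.mem_bot]
  by_cases hc : ∃ a : R, a • u ∈ N ∧ a • u ≠ 0
  · obtain ⟨a, haN, ha0⟩ := hc
    left
    refine isAssociatedPrime_iff.mpr ⟨hp1, ⟨a • u, haN⟩, ?_⟩
    ext r
    rw [Submodule.mem_colon_singleton, Submodule.mem_bot]
    rw [show r • (⟨a • u, haN⟩ : N) = ⟨r • (a • u), N.smul_mem r haN⟩ from rfl,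
      Submodule.mk_eq_zero]
    constructor
    · intro hr
      rw [smul_comm, (humem r).mp hr, smul_zero]
    · intro hr
      rw [smul_smul] at hr
      have hra : r * a ∈ p := (humem _).mpr hr
      rcases hp1.mem_or_mem hra with h | h
      · exact h
      · exact absurd ((humem a).mp h) ha0
  · push_neg at hc
    right
    refine isAssociatedPrime_iff.mpr ⟨hp1, Submodule.Quotient.mk u, ?_⟩
    ext r
    rw [Submodule.mem_colon_singleton, Submodule.mem_bot, ← Submodule.Quotient.mk_smul,
      Submodule.Quotient.mk_eq_zero]
    constructor
    · intro hr
      rw [(humem r).mp hr]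
      exact N.zero_mem
    · intro hr
      exact (humem r).mpr (hc r hr)

lemma isAssociatedPrime_span_singleton_eq [IsNoetherianRing R] {p : Ideal R} (hp1 : p.IsPrime) (u : M)
    (hann : p = (Submodule.span R {u}).annihilator) {q : Ideal R}
    (hq : IsAssociatedPrime q (Submodule.span R {u} : Submodule R M)) : q = p := by
  obtain ⟨hq1, x, hx⟩ := isAssociatedPrime_iff.mp hq
  obtain ⟨a, ha⟩ := Submodule.mem_span_singleton.mp x.2
  have humem : ∀ r : R, r ∈ p ↔ r • u = 0 := fun r =>
    hann ▸ Submodule.mem_annihilator_span_singleton u r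
  have hqmem : ∀ r : R, r ∈ q ↔ r • (x : M) = 0 := by
    intro r
    rw [hx, Submodule.mem_colon_singleton, Submodule.mem_bot]
    constructor
    · intro h
      have : ((r • x : _) : M) = 0 := by rw [h]; rfl
      simpa using this
    · intro h
      ext
      simpa using h
  have hx0 : (x : M) ≠ 0 := by
    intro h0
    refine hq1.ne_top ?_
    rw [Ideal.eq_top_iff_one, hqmem]
    rw [h0, smul_zero]
  have hanp : a ∉ p := by
    intro h
    exact hx0 (by rw [← ha, (humem a).mp h])
  ext r
  rw [hqmem, ← ha, smul_smul, ← humem]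
  exact ⟨fun h => (hp1.mem_or_mem h).resolve_right hanp, fun h => Ideal.mul_mem_right _ _ h⟩

lemma associatedPrimes_finite (R M : Type u) [CommRing R] [IsNoetherianRing R] [AddCommGroup M]
    [Module R M] [Module.Finite R M] : (associatedPrimes R M).Finite := by
  haveI : IsNoetherian R M := isNoetherian_of_isNoetherianRing_of_finite R M
  suffices h : ∀ N : Submodule R M, (associatedPrimes R (M ⧸ N)).Finite by
    have := h ⊥
    rwa [LinearEquiv.AssociatedPrimes.eq (Submodule.quotEquivOfEqBot (⊥ : Submodule R M) rfl)] at this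
  intro N
  induction N using IsNoetherian.induction with
  | hgt N IH =>
  by_cases hN : N = ⊤
  · subst hN
    haveI : Subsingleton (M ⧸ (⊤ : Submodule R M)) :=
      Submodule.Quotient.subsingleton_iff.mpr rfl
    rw [associatedPrimes.eq_empty_of_subsingleton]
    exact Set.finite_empty
  · haveI : Nontrivial (M ⧸ N) :=
      Submodule.Quotient.nontrivial_iff.mpr hN
    obtain ⟨p, hp⟩ := associatedPrimes.nonempty R (M ⧸ N)
    obtain ⟨hp1, ub, hann⟩ := (isAssociatedPrime_iff (I := p) (M := M ⧸ N)).mp hp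
    obtain ⟨u, rfl⟩ := Submodule.Quotient.mk_surjective N ub
    have hu0 : Submodule.Quotient.mk (p := N) u ≠ 0 := by
      intro h0
      refine hp1.ne_top ?_
      rw [Ideal.eq_top_iff_one, hann, Submodule.mem_colon_singleton, Submodule.mem_bot, h0, smul_zero]
    have huN : u ∉ N := fun h => hu0 ((Submodule.Quotient.mk_eq_zero N).mpr h)
    set J : Submodule R M := N ⊔ Submodule.span R {u} with hJ
    have hNJ : N < J := by
      refine lt_of_le_of_ne le_sup_left fun h => huN ?_
      rw [h]
      exact Submodule.mem_sup_right (Submodule.mem_span_singleton_self u)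
    have hfin : (associatedPrimes R (M ⧸ J)).Finite := IH J hNJ
    refine (hfin.insert p).subset ?_
    intro q hq
    have hmap : J.map N.mkQ = Submodule.span R {Submodule.Quotient.mk (p := N) u} := by
      rw [hJ, Submodule.map_sup, Submodule.map_span, Set.image_singleton]
      have : N.map N.mkQ = ⊥ := by
        rw [eq_bot_iff]
        rintro _ ⟨x, hx, rfl⟩
        simpa [Submodule.mkQ_apply, Submodule.Quotient.mk_eq_zero] using hx
      rw [this, bot_sup_eq]
      rfl
    rcases isAssociatedPrime_sub_or_quot (J.map N.mkQ) hq with h | h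
    · left
      rw [hmap] at h
      exact isAssociatedPrime_span_singleton_eq hp1 _ (by ext r; rw [hann, Submodule.mem_colon_singleton, Submodule.mem_bot, Submodule.mem_annihilator_span_singleton]) h
    · right
      exact (LinearEquiv.isAssociatedPrime_iff
        (Submodule.quotientQuotientEquivQuotient N J le_sup_left)).mp h

/-- In a Noetherian local ring, a finite module with trivial socle admits a
nonzerodivisor from the maximal ideal. -/
lemma exists_nzd_of_socle_free (R M : Type u) [CommRing R] [IsNoetherianRing R] [IsLocalRing R]
    [AddCommGroup M] [Module R M] [Module.Finite R M]
    (hsoc : ∀ u : M, (∀ w ∈ mIdl R, w • u = 0) → u = 0) :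
    ∃ y ∈ mIdl R, IsSMulRegular M y := by
  classical
  have hfin := associatedPrimes_finite R M
  have hntm : ¬ (mIdl R : Set R) ⊆ ⋃ p ∈ hfin.toFinset, (p : Set R) := by
    intro hsub
    have := (Ideal.subset_union_prime (⊥ : Ideal R) ⊥ (fun p hp _ _ => by
      have : IsAssociatedPrime p M := hfin.mem_toFinset.mp hp
      exact this.isPrime)).mp (by simpa using hsub)
    obtain ⟨p, hpmem, hle⟩ := this
    have hass : IsAssociatedPrime p M := hfin.mem_toFinset.mp hpmem
    have hpm : p = mIdl R := by
      refine le_antisymm ?_ (by rwa [mIdl_eq] at hle ⊢)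
      rw [mIdl_eq]
      exact IsLocalRing.le_maximalIdeal hass.isPrime.ne_top
    obtain ⟨hp1, x, hx⟩ := isAssociatedPrime_iff.mp hass
    have hx0 : x ≠ 0 := by
      intro h0
      refine hp1.ne_top ?_
      rw [Ideal.eq_top_iff_one, hx, h0, Submodule.mem_colon_singleton, smul_zero]
      exact Submodule.zero_mem _
    refine hx0 (hsoc x fun w hw => ?_)
    rw [← Submodule.mem_bot R, ← Submodule.mem_colon_singleton, ← hx, hpm]
    exact hw
  rw [Set.not_subset] at hntm
  obtain ⟨y, hy, hyn⟩ := hntm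
  refine ⟨y, hy, ?_⟩
  refine isSMulRegular_iff_right_eq_zero_of_smul.mpr fun x hx => ?_
  by_contra hx0
  refine hyn ?_
  have : y ∈ ⋃ p ∈ associatedPrimes R M, (p : Set R) := by
    rw [biUnion_associatedPrimes_eq_zero_divisors]
    exact ⟨x, hx0, hx⟩
  simpa [Set.mem_iUnion, hfin.mem_toFinset] using this

end AssPrimes
section Depth

variable {B : Type u} [CommRing B]

lemma quot_isNoetherian [IsNoetherianRing B] (I : Ideal B) : IsNoetherianRing (B ⧸ I) :=
  isNoetherianRing_of_surjective B _ (Ideal.Quotient.mk I) Ideal.Quotient.mk_surjective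

lemma quot_isLocalRing [IsLocalRing B] {I : Ideal B} (hI : I ≠ ⊤) : IsLocalRing (B ⧸ I) := by
  haveI := Ideal.Quotient.nontrivial_iff.mpr hI
  exact IsLocalRing.of_surjective' _ Ideal.Quotient.mk_surjective

lemma span_singleton_ne_top [IsLocalRing B] {r : B} (hr : r ∈ mIdl B) :
    Ideal.span {r} ≠ ⊤ := by
  intro h
  have h1 : (1 : B) ∈ Ideal.span {r} := h ▸ Submodule.mem_top
  obtain ⟨a, ha⟩ := Ideal.mem_span_singleton'.mp h1
  have h2 : (1 : B) ∈ mIdl B := ha ▸ Ideal.mul_mem_left _ a hr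
  rw [mIdl_eq] at h2
  exact (IsLocalRing.maximalIdeal.isMaximal B).ne_top
    (Ideal.eq_top_of_isUnit_mem _ h2 isUnit_one)

lemma quot_smul_eq (I : Ideal B) (y : B) (a : B ⧸ I) :
    y • a = Ideal.Quotient.mk I y * a := by
  obtain ⟨b, rfl⟩ := Ideal.Quotient.mk_surjective a
  rw [← map_mul]
  rfl

/-- Depth at least `k`, witnessed by an explicit chain of nonzerodivisors. -/
def DepthGE : ℕ → ∀ (B : Type u) [CommRing B], Prop
  | 0, _, _ => True
  | (k + 1), B, _ => ∃ r : B, r ∈ mIdl B ∧ (∀ a : B, r * a = 0 → a = 0) ∧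
      DepthGE k (B ⧸ Ideal.span {r})

lemma DepthGE.congr : ∀ (k : ℕ) {B C : Type u} [CommRing B] [CommRing C] (_ : B ≃+* C),
    DepthGE k B → DepthGE k C
  | 0, _, _, _, _, _, _ => trivial
  | (k + 1), B, C, _, _, e, ⟨r, hm, hnzd, hd⟩ => by
    refine ⟨e r, ?_, ?_, ?_⟩
    · rw [mIdl, Ideal.mem_jacobson_bot] at hm ⊢
      intro y
      have h2 := (hm (e.symm y)).map e.toRingHom
      simpa using h2
    · intro a ha
      have h1 : r * e.symm a = 0 := by
        apply e.injective
        simpa using ha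
      simpa using congrArg e (hnzd _ h1)
    · refine DepthGE.congr k (Ideal.quotientEquiv _ _ e ?_) hd
      rw [Ideal.map_span, Set.image_singleton]
      rfl

lemma nzd_quot_swap {x y : B}
    (hx : ∀ a : B, x * a = 0 → a = 0)
    (hyq : ∀ a : B, y * a ∈ Ideal.span {x} → a ∈ Ideal.span {x}) :
    ∀ a : B, x * a ∈ Ideal.span {y} → a ∈ Ideal.span {y} := by
  intro a ha
  obtain ⟨v, hv⟩ := Ideal.mem_span_singleton'.mp ha
  have h1 : v ∈ Ideal.span {x} :=
    hyq v (Ideal.mem_span_singleton'.mpr ⟨a, by linear_combination - hv⟩)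
  obtain ⟨w, hw⟩ := Ideal.mem_span_singleton'.mp h1
  have h2 : x * (a - w * y) = 0 := by linear_combination - hv - y * hw
  exact Ideal.mem_span_singleton'.mpr ⟨w, (sub_eq_zero.mp (hx _ h2)).symm⟩

/-- The key depth descent: if `B` has depth at least `k+1` and `x ∈ 𝔪` is a
nonzerodivisor, then `B/(x)` has depth at least `k`. -/
lemma DepthGE.descent : ∀ (k : ℕ) (B : Type u) [CommRing B] [IsNoetherianRing B]
    [IsLocalRing B] {x : B} (_ : x ∈ mIdl B) (_ : ∀ a : B, x * a = 0 → a = 0),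
    DepthGE (k + 1) B → DepthGE k (B ⧸ Ideal.span {x})
  | 0, B, _, _, _, x, _, _, _ => trivial
  | (k + 1), B, _, _, _, x, hxm, hx, ⟨r, hrm, hrn, hd⟩ => by
    haveI : IsLocalRing (B ⧸ Ideal.span {r}) := quot_isLocalRing (span_singleton_ne_top hrm)
    haveI : IsNoetherianRing (B ⧸ Ideal.span {r}) := quot_isNoetherian _
    -- extract the second nonzerodivisor from the chain
    have hdkeep := hd
    obtain ⟨r₂', hr₂m', hr₂n, -⟩ := hd
    rw [mIdl_quot _ (span_singleton_ne_top hrm)] at hr₂m'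
    obtain ⟨r₂, hr₂m, rfl⟩ := Ideal.mem_map_iff_of_surjective _
      Ideal.Quotient.mk_surjective |>.mp hr₂m'
    -- socle-freeness of B/(x)
    have hsocX : ∀ g : B, (∀ w ∈ mIdl B, g * w ∈ Ideal.span {x}) → g ∈ Ideal.span {x} := by
      intro g hg
      obtain ⟨h, hh⟩ := Ideal.mem_span_singleton'.mp (hg r hrm)
      have hhm : ∀ w ∈ mIdl B, h * w ∈ Ideal.span {r} := by
        intro w hw
        obtain ⟨q, hq⟩ := Ideal.mem_span_singleton'.mp (hg w hw)
        have : x * (h * w - q * r) = 0 := by linear_combination w * hh - r * hq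
        exact Ideal.mem_span_singleton'.mpr ⟨q, (sub_eq_zero.mp (hx _ this)).symm⟩
      have hmk : Ideal.Quotient.mk (Ideal.span {r}) r₂ * Ideal.Quotient.mk _ h = 0 := by
        rw [← map_mul, Ideal.Quotient.eq_zero_iff_mem, mul_comm]
        exact hhm r₂ hr₂m
      have : h ∈ Ideal.span {r} := by
        rw [← Ideal.Quotient.eq_zero_iff_mem]
        exact hr₂n _ hmk
      obtain ⟨h', hh'⟩ := Ideal.mem_span_singleton'.mp this
      have : r * (g - h' * x) = 0 := by linear_combination - hh - x * hh'
      exact Ideal.mem_span_singleton'.mpr ⟨h', (sub_eq_zero.mp (hrn _ this)).symm⟩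
    -- build the product module and find a common nonzerodivisor y
    have hsocM : ∀ u : B × ((B ⧸ Ideal.span {x}) × (B ⧸ Ideal.span {r})),
        (∀ w ∈ mIdl B, w • u = 0) → u = 0 := by
      rintro ⟨a, b, c⟩ hu
      have hcomp : ∀ w ∈ mIdl B, w • a = 0 ∧ w • b = 0 ∧ w • c = 0 := by
        intro w hw
        have h0 := hu w hw
        rw [Prod.smul_mk, Prod.smul_mk, Prod.mk_eq_zero, Prod.mk_eq_zero] at h0
        exact ⟨h0.1, h0.2.1, h0.2.2⟩
      have ha : a = 0 := by
        refine (socFree_of_nzd hrm hrn) a fun w hw => ?_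
        have := (hcomp w hw).1
        rwa [smul_eq_mul, mul_comm] at this
      have hb : b = 0 := by
        obtain ⟨g, rfl⟩ := Ideal.Quotient.mk_surjective b
        rw [Ideal.Quotient.eq_zero_iff_mem]
        refine hsocX g fun w hw => ?_
        have := (hcomp w hw).2.1
        rw [quot_smul_eq, ← map_mul, Ideal.Quotient.eq_zero_iff_mem] at this
        rwa [mul_comm]
      have hc : c = 0 := by
        obtain ⟨g, rfl⟩ := Ideal.Quotient.mk_surjective c
        have := (hcomp r₂ hr₂m).2.2
        rw [quot_smul_eq] at this
        exact hr₂n _ this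
      simp [ha, hb, hc]
    haveI : Module.Finite B (B ⧸ Ideal.span {x}) :=
      Module.Finite.of_surjective (Ideal.span {x} : Ideal B).mkQ (Submodule.mkQ_surjective _)
    haveI : Module.Finite B (B ⧸ Ideal.span {r}) :=
      Module.Finite.of_surjective (Ideal.span {r} : Ideal B).mkQ (Submodule.mkQ_surjective _)
    obtain ⟨y, hym, hyreg⟩ := exists_nzd_of_socle_free B
      (B × ((B ⧸ Ideal.span {x}) × (B ⧸ Ideal.span {r}))) hsocM
    -- y is a nonzerodivisor on B, B/x, B/r
    have hyP2 : IsSMulRegular ((B ⧸ Ideal.span {x}) × (B ⧸ Ideal.span {r})) y :=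
      hyreg.of_injective (LinearMap.inr B _ _) LinearMap.inr_injective
    have hyXm : IsSMulRegular (B ⧸ Ideal.span {x}) y :=
      hyP2.of_injective (LinearMap.inl B _ _) LinearMap.inl_injective
    have hyRm : IsSMulRegular (B ⧸ Ideal.span {r}) y :=
      hyP2.of_injective (LinearMap.inr B _ _) LinearMap.inr_injective
    have hyX : ∀ a : B, y * a ∈ Ideal.span {x} → a ∈ Ideal.span {x} := by
      intro a ha
      have := hyXm.right_eq_zero_of_smul (x := Ideal.Quotient.mk _ a)
        (by rw [quot_smul_eq, ← map_mul, Ideal.Quotient.eq_zero_iff_mem]; exact ha)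
      rwa [← Ideal.Quotient.eq_zero_iff_mem]
    have hyR : ∀ a : B, y * a ∈ Ideal.span {r} → a ∈ Ideal.span {r} := by
      intro a ha
      have := hyRm.right_eq_zero_of_smul (x := Ideal.Quotient.mk _ a)
        (by rw [quot_smul_eq, ← map_mul, Ideal.Quotient.eq_zero_iff_mem]; exact ha)
      rwa [← Ideal.Quotient.eq_zero_iff_mem]
    -- swaps
    have hxY : ∀ a : B, x * a ∈ Ideal.span {y} → a ∈ Ideal.span {y} := nzd_quot_swap hx hyX
    have hrY : ∀ a : B, r * a ∈ Ideal.span {y} → a ∈ Ideal.span {y} := nzd_quot_swap hrn hyR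
    -- DepthGE (k+1) (B/(y))
    haveI : IsLocalRing (B ⧸ Ideal.span {y}) := quot_isLocalRing (span_singleton_ne_top hym)
    haveI : IsNoetherianRing (B ⧸ Ideal.span {y}) := quot_isNoetherian _
    have hdY : DepthGE (k + 1) (B ⧸ Ideal.span {y}) := by
      refine ⟨Ideal.Quotient.mk _ r, mk_mem_mIdl _ hrm, ?_, ?_⟩
      · intro a ha
        obtain ⟨b, rfl⟩ := Ideal.Quotient.mk_surjective a
        rw [← map_mul, Ideal.Quotient.eq_zero_iff_mem] at ha
        rw [Ideal.Quotient.eq_zero_iff_mem]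
        exact hrY b ha
      · -- (B/(y))/(r) ≃ (B/(r))/(y), and the latter has depth ≥ k by recursion
        have hyRn : ∀ a : B ⧸ Ideal.span {r},
            Ideal.Quotient.mk (Ideal.span {r}) y * a = 0 → a = 0 := by
          intro a ha
          obtain ⟨b, rfl⟩ := Ideal.Quotient.mk_surjective a
          rw [← map_mul, Ideal.Quotient.eq_zero_iff_mem] at ha
          rw [Ideal.Quotient.eq_zero_iff_mem]
          exact hyR b ha
        have hrec := DepthGE.descent k (B ⧸ Ideal.span {r})
          (mk_mem_mIdl _ hym) hyRn hdkeep
        have heq : ((B ⧸ Ideal.span {r}) ⧸ Ideal.span {Ideal.Quotient.mk (Ideal.span {r}) y})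
            ≃+* ((B ⧸ Ideal.span {y}) ⧸ Ideal.span {Ideal.Quotient.mk (Ideal.span {y}) r}) := by
          have e1 := DoubleQuot.quotQuotEquivComm (Ideal.span {r}) (Ideal.span {y})
          rw [Ideal.map_span, Ideal.map_span, Set.image_singleton, Set.image_singleton] at e1
          exact e1
        exact DepthGE.congr k heq hrec
    -- final assembly : DepthGE (k+1) (B/(x))
    have hxYn : ∀ a : B ⧸ Ideal.span {y},
        Ideal.Quotient.mk (Ideal.span {y}) x * a = 0 → a = 0 := by
      intro a ha
      obtain ⟨b, rfl⟩ := Ideal.Quotient.mk_surjective a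
      rw [← map_mul, Ideal.Quotient.eq_zero_iff_mem] at ha
      rw [Ideal.Quotient.eq_zero_iff_mem]
      exact hxY b ha
    refine ⟨Ideal.Quotient.mk _ y, mk_mem_mIdl _ hym, ?_, ?_⟩
    · intro a ha
      obtain ⟨b, rfl⟩ := Ideal.Quotient.mk_surjective a
      rw [← map_mul, Ideal.Quotient.eq_zero_iff_mem] at ha
      rw [Ideal.Quotient.eq_zero_iff_mem]
      exact hyX b ha
    · have hrec := DepthGE.descent k (B ⧸ Ideal.span {y}) (mk_mem_mIdl _ hxm) hxYn hdY
      have heq : ((B ⧸ Ideal.span {y}) ⧸ Ideal.span {Ideal.Quotient.mk (Ideal.span {y}) x})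
          ≃+* ((B ⧸ Ideal.span {x}) ⧸ Ideal.span {Ideal.Quotient.mk (Ideal.span {x}) y}) := by
        have e1 := DoubleQuot.quotQuotEquivComm (Ideal.span {y}) (Ideal.span {x})
        rw [Ideal.map_span, Ideal.map_span, Set.image_singleton, Set.image_singleton] at e1
        exact e1
      exact DepthGE.congr k heq hrec

end Depth
section MainInduction

variable {B : Type u} [CommRing B]

lemma one_not_mem_mIdl [IsLocalRing B] : (1 : B) ∉ mIdl B := by
  intro h
  rw [mIdl_eq] at h
  exact (IsLocalRing.maximalIdeal.isMaximal B).ne_top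
    (Ideal.eq_top_of_isUnit_mem _ h isUnit_one)

lemma pow_mIdl_ne_top [IsLocalRing B] (j : ℕ) (hj : 1 ≤ j) : mIdl B ^ j ≠ ⊤ := by
  intro h
  have h1 : (1 : B) ∈ mIdl B ^ j := h ▸ Submodule.mem_top
  exact one_not_mem_mIdl (by
    have := Ideal.pow_le_self (Nat.one_le_iff_ne_zero.mp hj) h1
    exact this)

lemma isSuperficialSeq_cons (y : B) (t : List B) :
    IsSuperficialSeq B (y :: t) ↔ IsSuperficial B y ∧
      IsSuperficialSeq (B ⧸ Ideal.span {y}) (t.map (Ideal.Quotient.mk (Ideal.span {y}))) := by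
  rw [IsSuperficialSeq]

lemma thetaSeq_cons (y : B) (t : List B) :
    thetaSeq B (y :: t) = min (theta B y)
      (thetaSeq (B ⧸ Ideal.span {y}) (t.map (Ideal.Quotient.mk (Ideal.span {y})))) := by
  rw [thetaSeq]

lemma gradedLinRegSeq_cons (y : B) (t : List B) :
    GradedLinRegSeq B (y :: t) ↔ LinearInitialFormRegular B y ∧
      GradedLinRegSeq (B ⧸ Ideal.span {y}) (t.map (Ideal.Quotient.mk (Ideal.span {y}))) := by
  rw [GradedLinRegSeq]

lemma gradedLinRegSeq_nil : GradedLinRegSeq B ([] : List B) := by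
  rw [GradedLinRegSeq]
  trivial

lemma span_mem_list_cons (y : B) (t : List B) :
    Ideal.span {a : B | a ∈ y :: t} = Ideal.span {y} ⊔ Ideal.span {a : B | a ∈ t} := by
  have : {a : B | a ∈ y :: t} = insert y {a : B | a ∈ t} := by
    ext a; simp [List.mem_cons]
  rw [this, Ideal.span_insert]

end MainInduction
section Main

/-- Main induction: along a superficial sequence with `𝔪^n ⊆ (𝐱)`, `n ≤ ϑ`, positive
depth at each stage, the initial forms are a regular sequence on `G`, and the head
satisfies all colon equalities. -/
lemma main_induction : ∀ (k : ℕ) (B : Type u) [CommRing B] [IsNoetherianRing B]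
    [IsLocalRing B] (ys : List B) (_ : ys.length = k) (n : ℕ) (_ : 1 ≤ n)
    (_ : IsSuperficialSeq B ys) (_ : (n : ℕ∞) ≤ thetaSeq B ys)
    (_ : mIdl B ^ n ≤ Ideal.span {a : B | a ∈ ys}) (_ : DepthGE k B),
    GradedLinRegSeq B ys ∧
      ∀ y t, ys = y :: t →
        ∀ j : ℕ, (mIdl B ^ (j + 1)).colon (Ideal.span {y}) = mIdl B ^ j
  | k, B, _, _, _, [], hk, n, hn1, _, _, _, _ => ⟨gradedLinRegSeq_nil, by simp⟩
  | 0, B, _, _, _, (y :: t), hk, n, hn1, _, _, _, _ => by simp at hk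
  | (k + 1), B, _, _, _, (y :: t), hk, n, hn1, hsup, hθ, hcont, hdep => by
    have hk' : t.length = k := by simpa using hk
    rw [isSuperficialSeq_cons] at hsup
    obtain ⟨hysup, hsup'⟩ := hsup
    rw [thetaSeq_cons, le_min_iff] at hθ
    obtain ⟨hθy, hθ'⟩ := hθ
    have hysup2 := hysup
    obtain ⟨hym, c, hc0, N, hN⟩ := hysup
    have H3 : ∀ {j : ℕ}, j < n →
        (mIdl B ^ (j + 1)).colon (Ideal.span {y}) = mIdl B ^ j :=
      fun hj => theta_colon hθy hj
    have hdepkeep := hdep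
    obtain ⟨r, hrm, hrn, -⟩ := hdep
    have hsf : SocFree B := socFree_of_nzd hrm hrn
    have hyNZD : ∀ a : B, y * a = 0 → a = 0 := nzd_of_superficial hsf hysup2
    rw [span_mem_list_cons] at hcont
    -- the tail of the graded regular sequence, and the colon inequalities for y
    have tail : GradedLinRegSeq (B ⧸ Ideal.span {y})
          (t.map (Ideal.Quotient.mk (Ideal.span {y}))) ∧
        (∀ j, (mIdl B ^ (j + 1)).colon (Ideal.span {y}) ≤ mIdl B ^ j) := by
      rcases t with _ | ⟨z, t₂⟩
      · -- dimension one case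
        constructor
        · simpa using gradedLinRegSeq_nil (B := B ⧸ Ideal.span {y})
        · have hcont1 : mIdl B ^ n ≤ Ideal.span {y} := by
            have he : Ideal.span {a : B | a ∈ ([] : List B)} = ⊥ := by simp
            rwa [he, sup_bot_eq] at hcont
          obtain ⟨n', rfl⟩ : ∃ n', n = n' + 1 := ⟨n - 1, by omega⟩
          have hbase : mIdl B ^ (n' + 1) ≤ Ideal.span {y} * mIdl B ^ n' := by
            intro u hu
            obtain ⟨b, hb⟩ := Ideal.mem_span_singleton'.mp (hcont1 hu)
            have hbmem : b ∈ mIdl B ^ n' := by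
              rw [← H3 (Nat.lt_succ_self n')]
              rw [Ideal.mem_colon_span_singleton, hb]
              exact hu
            rw [← hb]
            rw [Ideal.mem_span_singleton_mul]
            exact ⟨b, hbmem, mul_comm y b ▸ rfl⟩
          have hred : ∀ q, mIdl B ^ (n' + 1 + q) ≤ Ideal.span {y} * mIdl B ^ (n' + q) := by
            intro q
            induction q with
            | zero => simpa using hbase
            | succ q ih =>
              have e1 : n' + 1 + (q + 1) = (n' + 1 + q) + 1 := by omega
              rw [e1, pow_succ]
              calc mIdl B ^ (n' + 1 + q) * mIdl B
                  ≤ (Ideal.span {y} * mIdl B ^ (n' + q)) * mIdl B :=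
                    Ideal.mul_mono_left ih
                _ = Ideal.span {y} * mIdl B ^ (n' + q + 1) := by
                    rw [mul_assoc, ← pow_succ]
          intro j
          by_cases hj : j < n' + 1
          · exact (H3 hj).le
          · intro u hu
            rw [Ideal.mem_colon_span_singleton] at hu
            have hmem : u * y ∈ Ideal.span {y} * mIdl B ^ j := by
              have e1 : n' + 1 + (j - n') = j + 1 := by omega
              have e2 : n' + (j - n') = j := by omega
              have h2 := hred (j - n')
              rw [e1, e2] at h2
              exact h2 hu
            obtain ⟨w, hw, hwy⟩ := Ideal.mem_span_singleton_mul.mp hmem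
            have h0 : y * (u - w) = 0 := by linear_combination - hwy
            have h1 := hyNZD _ h0
            rw [sub_eq_zero] at h1
            exact h1 ▸ hw
      · -- dimension at least two : Sally machine
        haveI : IsLocalRing (B ⧸ Ideal.span {y}) := quot_isLocalRing (span_singleton_ne_top hym)
        haveI : IsNoetherianRing (B ⧸ Ideal.span {y}) := quot_isNoetherian _
        have hcont' : mIdl (B ⧸ Ideal.span {y}) ^ n ≤
            Ideal.span {a | a ∈ (z :: t₂).map (Ideal.Quotient.mk (Ideal.span {y}))} := by
          rw [mIdl_quot_pow _ (span_singleton_ne_top hym) n]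
          have h1 := Ideal.map_mono (f := Ideal.Quotient.mk (Ideal.span {y})) hcont
          rw [Ideal.map_sup, Ideal.map_quotient_self, bot_sup_eq, Ideal.map_span] at h1
          refine (le_trans (Ideal.map_mono (le_refl _)) h1).trans ?_
          apply Ideal.span_mono
          intro a ha
          simp only [Set.mem_image, Set.mem_setOf_eq, List.mem_map] at ha ⊢
          exact ha
        have hdep' : DepthGE k (B ⧸ Ideal.span {y}) :=
          DepthGE.descent k B hym hyNZD hdepkeep
        obtain ⟨hGLR', hcol'⟩ := main_induction k (B ⧸ Ideal.span {y})
          ((z :: t₂).map (Ideal.Quotient.mk (Ideal.span {y}))) (by simpa using hk')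
          n hn1 hsup' hθ' hcont' hdep'
        have hzfull : ∀ j : ℕ, (mIdl (B ⧸ Ideal.span {y}) ^ (j + 1)).colon
            (Ideal.span {Ideal.Quotient.mk (Ideal.span {y}) z}) =
            mIdl (B ⧸ Ideal.span {y}) ^ j :=
          hcol' _ (t₂.map (Ideal.Quotient.mk (Ideal.span {y}))) (by simp)
        have hz'm : Ideal.Quotient.mk (Ideal.span {y}) z ∈ mIdl (B ⧸ Ideal.span {y}) := by
          have hsupz := hsup'
          rw [List.map_cons, isSuperficialSeq_cons] at hsupz
          exact hsupz.1.1
        have hproj : ∀ (i : ℕ) (g : B), g ∈ mIdl B ^ i →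
            Ideal.Quotient.mk (Ideal.span {y}) g ∈ mIdl (B ⧸ Ideal.span {y}) ^ i := by
          intro i g hg
          rw [mIdl_quot_pow _ (span_singleton_ne_top hym) i]
          exact Ideal.mem_map_of_mem _ hg
        have hlift : ∀ (i : ℕ) (a' : B ⧸ Ideal.span {y}), a' ∈ mIdl (B ⧸ Ideal.span {y}) ^ i →
            ∃ v, v ∈ mIdl B ^ i ∧ Ideal.Quotient.mk (Ideal.span {y}) v = a' := by
          intro i a' ha'
          rw [mIdl_quot_pow _ (span_singleton_ne_top hym) i] at ha'
          obtain ⟨v, hv1, hv2⟩ := Ideal.mem_map_iff_of_surjective _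
            Ideal.Quotient.mk_surjective |>.mp ha'
          exact ⟨v, hv1, hv2⟩
        have zpeel : ∀ (kk i : ℕ) (a : B ⧸ Ideal.span {y}),
            (Ideal.Quotient.mk (Ideal.span {y}) z) ^ kk * a ∈ mIdl (B ⧸ Ideal.span {y}) ^ i →
            a ∈ mIdl (B ⧸ Ideal.span {y}) ^ (i - kk) := by
          intro kk
          induction kk with
          | zero => intro i a ha; simpa using ha
          | succ kk ih =>
            intro i a ha
            have ha2 : (Ideal.Quotient.mk (Ideal.span {y}) z) ^ kk *
                ((Ideal.Quotient.mk (Ideal.span {y}) z) * a) ∈ mIdl (B ⧸ Ideal.span {y}) ^ i := by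
              rw [← mul_assoc, ← pow_succ]
              exact ha
            have h2 := ih i _ ha2
            cases hq : i - kk with
            | zero =>
              have : i - (kk + 1) = 0 := by omega
              rw [this]
              simp
            | succ q =>
              rw [hq] at h2
              have h3 : a ∈ (mIdl (B ⧸ Ideal.span {y}) ^ (q + 1)).colon
                  (Ideal.span {Ideal.Quotient.mk (Ideal.span {y}) z}) := by
                rw [Ideal.mem_colon_span_singleton, mul_comm]
                exact h2
              rw [hzfull q] at h3
              have : i - (kk + 1) = q := by omega
              rw [this]
              exact h3
        -- the core: given peeling at higher levels, the colon at level j is m^j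
        have core : ∀ j, n ≤ j →
            (∀ i u, 1 ≤ i → u * y ∈ mIdl B ^ (j + i + 1) → u ∈ mIdl B ^ c →
              u ∈ mIdl B ^ (j + i)) →
            (mIdl B ^ (j + 1)).colon (Ideal.span {y}) ≤ mIdl B ^ j := by
          intro j hjn peelOK u hu
          rw [Ideal.mem_colon_span_singleton] at hu
          have Rstep : ∀ s g, y ^ (s + 1) * g ∈ mIdl B ^ (j + 1) →
              ∃ w h, g = w + y * h ∧ y ^ s * w ∈ mIdl B ^ j ∧
                y ^ (s + 2) * h ∈ mIdl B ^ (j + 1) := by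
            intro s g hg
            have alpha : ∀ w ∈ mIdl B ^ (s + 1 + c), g * w ∈ mIdl B ^ (j + 1 + c) := by
              intro w hw
              have chain : ∀ q i, i + q = s → g * w * y ^ i ∈ mIdl B ^ (j + 1 + c + i) := by
                intro q
                induction q with
                | zero =>
                  intro i hi
                  have hi' : i = s := by omega
                  subst hi'
                  have h1 : (g * w * y ^ i) * y ∈ mIdl B ^ (j + (c + i + 1) + 1) := by
                    have h2 : (y ^ (i + 1) * g) * w ∈ mIdl B ^ (j + 1) * mIdl B ^ (i + 1 + c) :=
                      Ideal.mul_mem_mul hg hw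
                    rw [← pow_add] at h2
                    have e1 : j + 1 + (i + 1 + c) = j + (c + i + 1) + 1 := by omega
                    rw [e1] at h2
                    have e2 : g * w * y ^ i * y = y ^ (i + 1) * g * w := by ring
                    rw [e2]
                    exact h2
                  have h3 : g * w * y ^ i ∈ mIdl B ^ c := by
                    have hwc : w ∈ mIdl B ^ c :=
                      Ideal.pow_le_pow_right (by omega) hw
                    exact Ideal.mul_mem_right _ _ (Ideal.mul_mem_left _ g hwc)
                  have h4 := peelOK (c + i + 1) _ (by omega) h1 h3
                  have e3 : j + (c + i + 1) = j + 1 + c + i := by omega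
                  rw [e3] at h4
                  exact h4
                | succ q ih =>
                  intro i hi
                  have hnext := ih (i + 1) (by omega)
                  have h1 : (g * w * y ^ i) * y ∈ mIdl B ^ (j + (c + i + 1) + 1) := by
                    have e1 : j + 1 + c + (i + 1) = j + (c + i + 1) + 1 := by omega
                    rw [e1] at hnext
                    have e2 : g * w * y ^ i * y = g * w * y ^ (i + 1) := by ring
                    rw [e2]
                    exact hnext
                  have h3 : g * w * y ^ i ∈ mIdl B ^ c := by
                    have hwc : w ∈ mIdl B ^ c :=
                      Ideal.pow_le_pow_right (by omega) hw
                    exact Ideal.mul_mem_right _ _ (Ideal.mul_mem_left _ g hwc)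
                  have h4 := peelOK (c + i + 1) _ (by omega) h1 h3
                  have e3 : j + (c + i + 1) = j + 1 + c + i := by omega
                  rw [e3] at h4
                  exact h4
              have := chain s 0 (by omega)
              simpa using this
            -- project to the quotient and peel powers of z
            have hz'pow : (Ideal.Quotient.mk (Ideal.span {y}) z) ^ (s + 1 + c) ∈
                mIdl (B ⧸ Ideal.span {y}) ^ (s + 1 + c) :=
              Ideal.pow_mem_pow hz'm _
            obtain ⟨v, hvm, hveq⟩ := hlift _ _ hz'pow
            have hβ : (Ideal.Quotient.mk (Ideal.span {y}) z) ^ (s + 1 + c) *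
                (Ideal.Quotient.mk (Ideal.span {y}) g) ∈
                mIdl (B ⧸ Ideal.span {y}) ^ (j + 1 + c) := by
              rw [← hveq, ← map_mul]
              have := alpha v hvm
              rw [mul_comm] at this
              exact hproj _ _ this
            have hβ2 := zpeel (s + 1 + c) (j + 1 + c) _ hβ
            have hidx : j + 1 + c - (s + 1 + c) = j - s := by omega
            rw [hidx] at hβ2
            obtain ⟨w, hwm, hweq⟩ := hlift (j - s) _ hβ2
            have hsub : g - w ∈ Ideal.span {y} := by
              have : Ideal.Quotient.mk (Ideal.span {y}) g =
                  Ideal.Quotient.mk (Ideal.span {y}) w := hweq.symm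
              rwa [Ideal.Quotient.eq] at this
            obtain ⟨h, hh⟩ := Ideal.mem_span_singleton'.mp hsub
            refine ⟨w, h, by linear_combination - hh, ?_, ?_⟩
            · have h5 : y ^ s * w ∈ mIdl B ^ (s + (j - s)) := by
                rw [pow_add]
                exact Ideal.mul_mem_mul (Ideal.pow_mem_pow hym s) hwm
              exact Ideal.pow_le_pow_right (by omega) h5
            · have heq2 : y ^ (s + 2) * h = y ^ (s + 1) * g - y ^ (s + 1) * w := by
                linear_combination y ^ (s + 1) * hh
              rw [heq2]
              refine Submodule.sub_mem _ hg ?_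
              have h5 : y ^ (s + 1) * w ∈ mIdl B ^ (s + 1 + (j - s)) := by
                rw [pow_add]
                exact Ideal.mul_mem_mul (Ideal.pow_mem_pow hym (s + 1)) hwm
              exact Ideal.pow_le_pow_right (by omega) h5
          -- iterate: u ∈ m^j + (y)^s for all s
          have iter : ∀ s, ∃ v h, u = v + y ^ s * h ∧ v ∈ mIdl B ^ j ∧
              y ^ (s + 1) * h ∈ mIdl B ^ (j + 1) := by
            intro s
            induction s with
            | zero =>
              refine ⟨0, u, by simp, zero_mem _, ?_⟩
              rw [pow_one, mul_comm]
              exact hu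
            | succ s ih =>
              obtain ⟨v, h, he, hv, hyh⟩ := ih
              obtain ⟨w, h₂, hgeq, hysw, hyh₂⟩ := Rstep s h hyh
              refine ⟨v + y ^ s * w, h₂, ?_, Submodule.add_mem _ hv hysw, ?_⟩
              · rw [he, hgeq]; ring
              · have e1 : s + 1 + 1 = s + 2 := by omega
                rw [e1]
                exact hyh₂
          refine mem_of_mem_sup_pow (pow_mIdl_ne_top j (by omega)) hym fun s => ?_
          obtain ⟨v, h, he, hv, -⟩ := iter s
          rw [he]
          refine Submodule.add_mem_sup hv ?_
          rw [Ideal.span_singleton_pow]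
          exact Ideal.mem_span_singleton'.mpr ⟨h, mul_comm _ _⟩
        -- the two regimes assembled by downward induction below N
        have G2le : ∀ q j, N - j ≤ q →
            (mIdl B ^ (j + 1)).colon (Ideal.span {y}) ≤ mIdl B ^ j := by
          intro q
          induction q with
          | zero =>
            intro j hj
            by_cases hjn : j < n
            · exact (H3 hjn).le
            · refine core j (by omega) fun i u hi hu huc => ?_
              have h5 := hN (j + i) (by omega)
              rw [← h5]
              exact Submodule.mem_inf.mpr ⟨Ideal.mem_colon_span_singleton.mpr hu, huc⟩
          | succ q ih =>
            intro j hj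
            by_cases hjn : j < n
            · exact (H3 hjn).le
            · by_cases hjN : N ≤ j
              · refine core j (by omega) fun i u hi hu huc => ?_
                have h5 := hN (j + i) (by omega)
                rw [← h5]
                exact Submodule.mem_inf.mpr ⟨Ideal.mem_colon_span_singleton.mpr hu, huc⟩
              · refine core j (by omega) fun i u hi hu _ => ?_
                exact ih (j + i) (by omega) (Ideal.mem_colon_span_singleton.mpr hu)
        exact ⟨hGLR', fun j => G2le N j (by omega)⟩
    obtain ⟨hGLRtail, G2le⟩ := tail
    have G2 : ∀ j, (mIdl B ^ (j + 1)).colon (Ideal.span {y}) = mIdl B ^ j :=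
      fun j => le_antisymm (G2le j) (pow_le_colon hym j)
    have hy2 : y ∉ mIdl B ^ 2 := by
      intro h2
      have h1 : (1 : B) ∈ (mIdl B ^ (1 + 1)).colon (Ideal.span {y}) := by
        rw [Ideal.mem_colon_span_singleton, one_mul]
        exact h2
      rw [G2 1, pow_one] at h1
      exact one_not_mem_mIdl h1
    have hlin : LinearInitialFormRegular B y := by
      refine ⟨hym, hy2, fun j a _ hmul => ?_⟩
      have h1 : a ∈ (mIdl B ^ (j + 1 + 1)).colon (Ideal.span {y}) := by
        rw [Ideal.mem_colon_span_singleton, mul_comm]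
        have e1 : j + 1 + 1 = j + 2 := by omega
        rw [e1]
        exact hmul
      rwa [G2 (j + 1)] at h1
    refine ⟨(gradedLinRegSeq_cons y t).mpr ⟨hlin, hGLRtail⟩, ?_⟩
    intro y0 t0 heq j
    injection heq with h1 h2
    subst h1
    exact G2 j

end Main
section Glue

lemma superficialSeq_mem_mIdl : ∀ (k : ℕ) (B : Type u) [CommRing B] [IsLocalRing B]
    (ys : List B) (_ : ys.length = k) (_ : IsSuperficialSeq B ys), ∀ a ∈ ys, a ∈ mIdl B
  | _, _, _, _, [], _, _ => by simp
  | 0, _, _, _, (_ :: _), hk, _ => by simp at hk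
  | (k + 1), B, _, _, (y :: t), hk, hsup => by
    rw [isSuperficialSeq_cons] at hsup
    intro a ha
    rcases List.mem_cons.mp ha with rfl | hat
    · exact hsup.1.1
    · haveI : IsLocalRing (B ⧸ Ideal.span {y}) :=
        quot_isLocalRing (span_singleton_ne_top hsup.1.1)
      have hmk := superficialSeq_mem_mIdl k (B ⧸ Ideal.span {y})
        (t.map (Ideal.Quotient.mk (Ideal.span {y}))) (by simpa using hk) hsup.2
        (Ideal.Quotient.mk _ a) (List.mem_map_of_mem hat)
      rw [mIdl_quot _ (span_singleton_ne_top hsup.1.1)] at hmk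
      obtain ⟨w, hw, hweq⟩ := Ideal.mem_map_iff_of_surjective _
        Ideal.Quotient.mk_surjective |>.mp hmk
      have hsub : w - a ∈ Ideal.span {y} := Ideal.Quotient.eq.mp hweq
      have hym : w - a ∈ mIdl B :=
        (Ideal.span_singleton_le_iff_mem _ |>.mpr hsup.1.1) hsub
      have := Submodule.sub_mem _ hw hym
      simpa using this

open Pointwise in
lemma depthGE_of_weaklyRegular : ∀ (k : ℕ) (B : Type u) [CommRing B] (rs : List B)
    (_ : rs.length = k) (_ : ∀ r ∈ rs, r ∈ mIdl B)
    (_ : RingTheory.Sequence.IsWeaklyRegular B rs), DepthGE k B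
  | 0, _, _, _, _, _, _ => trivial
  | (k + 1), _, _, [], hk, _, _ => by simp at hk
  | (k + 1), B, _, (r :: rs), hk, hmem, hreg => by
    rw [RingTheory.Sequence.isWeaklyRegular_cons_iff] at hreg
    obtain ⟨h1, h2⟩ := hreg
    refine ⟨r, hmem r List.mem_cons_self, ?_, ?_⟩
    · intro a ha
      exact h1.right_eq_zero_of_smul (by rwa [smul_eq_mul])
    · have he : (r • (⊤ : Submodule B B)) = (Ideal.span {r} : Ideal B) := by
        rw [← Submodule.ideal_span_singleton_smul, Ideal.smul_eq_mul, Ideal.mul_top]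
      have e := Submodule.quotEquivOfEq _ _ he
      have h3 : RingTheory.Sequence.IsWeaklyRegular (B ⧸ Ideal.span {r}) rs :=
        (LinearEquiv.isWeaklyRegular_congr e rs).mp h2
      have h4 := (RingTheory.Sequence.isWeaklyRegular_map_algebraMap_iff
        (B ⧸ Ideal.span {r}) (B ⧸ Ideal.span {r}) rs).mpr h3
      rw [Ideal.Quotient.algebraMap_eq] at h4
      refine depthGE_of_weaklyRegular k _ (rs.map (Ideal.Quotient.mk _))
        (by simpa using hk) ?_ h4
      intro r' hr'
      obtain ⟨a, ha, rfl⟩ := List.mem_map.mp hr'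
      exact mk_mem_mIdl _ (hmem a (List.mem_cons_of_mem r ha))

end Glue
/-- **Crucial lemma.** Let `(A,𝔪)` be a `d`-dimensional Cohen–Macaulay local ring with
infinite residue field and `𝐱 = x₁,…,x_d` a maximal `A`-superficial sequence.  Assume
`G(A)` is not Cohen–Macaulay.  Then for every `n ≤ ϑ(A,𝐱)` we have `𝔪^n ⊄ (𝐱)`. -/
theorem pow_maximalIdeal_not_le_span (A : Type u) [CommRing A] [IsNoetherianRing A]
    [IsLocalRing A] [Infinite (ResidueField A)] (hCM : IsCohenMacaulayLocal A)
    (d : ℕ) (hd : ringKrullDim A = d)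
    (xs : List A) (hlen : xs.length = d) (hsup : IsSuperficialSeq A xs)
    (hnotCM : ¬ AssocGradedIsCM A) (n : ℕ) (hn : (n : ℕ∞) ≤ thetaSeq A xs) :
    ¬ (mIdl A ^ n ≤ Ideal.span {a : A | a ∈ xs}) := by
  intro hle
  have hspan_le : Ideal.span {a : A | a ∈ xs} ≤ mIdl A := by
    rw [Ideal.span_le]
    intro a ha
    exact superficialSeq_mem_mIdl xs.length A xs rfl hsup a ha
  rcases Nat.eq_zero_or_pos n with rfl | hn1
  · rw [pow_zero, Ideal.one_eq_top] at hle
    exact one_not_mem_mIdl (hspan_le (hle Submodule.mem_top))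
  · obtain ⟨rs, hrsm, hrsreg, hrslen⟩ := hCM
    have hlen2 : rs.length = d := by
      have h1 : ((rs.length : ℕ) : WithBot ℕ∞) = ((d : ℕ) : WithBot ℕ∞) := hrslen.trans hd
      exact_mod_cast h1
    have hdep : DepthGE xs.length A := by
      rw [hlen, ← hlen2]
      exact depthGE_of_weaklyRegular rs.length A rs rfl hrsm hrsreg.toIsWeaklyRegular
    obtain ⟨hGLR, -⟩ := main_induction xs.length A xs rfl n hn1 hsup hn hle hdep
    exact hnotCM ⟨xs, by rw [hlen, hd], hGLR⟩

end
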